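/- For a posterior matching scheme (where for each $y$, $S_y$ pushes the posterior $P_{{\tilde W}_1 | Y_1 = y}$ forward to the prior $P_W$, and ${\tilde W}_{n+1} = S_{Y_n}({\tilde W}_n)$), for every $n \geq 1$ the conditional distribution of ${\tilde W}_{n+1}$ given $Y_{1:n}$ equals the unconditional prior $P_W$ almost surely; in particular, ${\tilde W}_{n+1}$ is independent of $(Y_1, \ldots, Y_n)$. -/

import Mathlib

open MeasureTheory ProbabilityTheory

/-- Lemma 7: for a posterior matching scheme (`S_y` pushes the posterior `P_{W̃_1|Y_1=y}`
forward to the prior `P_W`, and `W̃_{n+1} = S_{Y_n}(W̃_n)`), the conditional distribution of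
`W̃_{n+1}` given `Y_{1:n}` is a.s. the prior `P_W`; in particular `W̃_{n+1}` is independent of
`(Y_1, …, Y_n)`. -/
private def pmTraj {𝒲 𝒴 𝒩 : Type*} (g : 𝒲 → 𝒩 → 𝒴) (S : 𝒴 → 𝒲 → 𝒲) :
    ℕ → 𝒲 × (ℕ → 𝒩) → 𝒲
  | 0 => fun p => p.1
  | (k+1) => fun p => S (g (pmTraj g S k p) (p.2 k)) (pmTraj g S k p)

private lemma pmTraj_measurable {𝒲 𝒴 𝒩 : Type*} [MeasurableSpace 𝒲] [MeasurableSpace 𝒴]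
    [MeasurableSpace 𝒩] {g : 𝒲 → 𝒩 → 𝒴} {S : 𝒴 → 𝒲 → 𝒲}
    (hg : Measurable fun p : 𝒲 × 𝒩 => g p.1 p.2)
    (hS : Measurable fun p : 𝒴 × 𝒲 => S p.1 p.2) :
    ∀ k, Measurable (pmTraj g S k)
  | 0 => measurable_fst
  | (k+1) => by
    have ih := pmTraj_measurable hg hS k
    have hgk : Measurable fun p : 𝒲 × (ℕ → 𝒩) => g (pmTraj g S k p) (p.2 k) :=
      hg.comp (ih.prodMk ((measurable_pi_apply k).comp measurable_snd))
    exact hS.comp (hgk.prodMk ih)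

private lemma pmTraj_congr {𝒲 𝒴 𝒩 : Type*} (g : 𝒲 → 𝒩 → 𝒴) (S : 𝒴 → 𝒲 → 𝒲) :
    ∀ (k : ℕ) (p q : 𝒲 × (ℕ → 𝒩)), p.1 = q.1 → (∀ i < k, p.2 i = q.2 i) →
      pmTraj g S k p = pmTraj g S k q
  | 0, p, q, h1, _ => h1
  | (k+1), p, q, h1, h2 => by
    have ih := pmTraj_congr g S k p q h1 (fun i hi => h2 i (Nat.lt_succ_of_lt hi))
    simp only [pmTraj, ih, h2 k (Nat.lt_succ_self k)]

private lemma indep_prod_mk_left_aux {Ω A B C : Type*} {mΩ : MeasurableSpace Ω}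
    [MeasurableSpace A] [MeasurableSpace B] [MeasurableSpace C]
    {μ : Measure Ω} [IsProbabilityMeasure μ]
    {f : Ω → A} {g : Ω → B} {h : Ω → C}
    (hf : Measurable f) (hg : Measurable g) (hh : Measurable h)
    (h1 : IndepFun f (fun ω => (g ω, h ω)) μ) (h2 : IndepFun g h μ) :
    IndepFun (fun ω => (f ω, g ω)) h μ := by
  haveI : IsProbabilityMeasure (μ.map f) := Measure.isProbabilityMeasure_map hf.aemeasurable
  haveI : IsProbabilityMeasure (μ.map g) := Measure.isProbabilityMeasure_map hg.aemeasurable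
  haveI : IsProbabilityMeasure (μ.map h) := Measure.isProbabilityMeasure_map hh.aemeasurable
  have hfg : IndepFun f g μ := h1.comp measurable_id measurable_fst
  rw [indepFun_iff_map_prod_eq_prod_map_map (hf.prodMk hg).aemeasurable hh.aemeasurable]
  rw [indepFun_iff_map_prod_eq_prod_map_map hf.aemeasurable
    (hg.prodMk hh).aemeasurable] at h1
  rw [indepFun_iff_map_prod_eq_prod_map_map hg.aemeasurable hh.aemeasurable] at h2
  rw [indepFun_iff_map_prod_eq_prod_map_map hf.aemeasurable hg.aemeasurable] at hfg
  have hassoc : μ.map (fun ω => (f ω, (g ω, h ω)))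
      = Measure.map (MeasurableEquiv.prodAssoc)
          (μ.map (fun ω => ((f ω, g ω), h ω))) := by
    rw [Measure.map_map MeasurableEquiv.prodAssoc.measurable ((hf.prodMk hg).prodMk hh)]
    rfl
  have hkey : Measure.map (MeasurableEquiv.prodAssoc : (A × B) × C ≃ᵐ A × B × C)
        (μ.map (fun ω => ((f ω, g ω), h ω)))
      = Measure.map (MeasurableEquiv.prodAssoc)
        (((μ.map f).prod (μ.map g)).prod (μ.map h)) := by
    rw [← hassoc, h1, h2, Measure.prodAssoc_prod]
  have := congrArg (Measure.map (MeasurableEquiv.prodAssoc :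
    (A × B) × C ≃ᵐ A × B × C).symm) hkey
  rw [Measure.map_map (MeasurableEquiv.prodAssoc).symm.measurable
        MeasurableEquiv.prodAssoc.measurable,
      Measure.map_map (MeasurableEquiv.prodAssoc).symm.measurable
        MeasurableEquiv.prodAssoc.measurable,
      MeasurableEquiv.symm_comp_self, Measure.map_id, Measure.map_id] at this
  rw [this, hfg]

theorem pm_posterior_eq_prior
    {Ω 𝒲 𝒴 𝒩 : Type*} {mΩ : MeasurableSpace Ω}
    [MeasurableSpace 𝒲] [StandardBorelSpace 𝒲] [Nonempty 𝒲]
    [MeasurableSpace 𝒴] [MeasurableSpace 𝒩]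
    (μ : Measure Ω) [IsProbabilityMeasure μ]
    (W : Ω → 𝒲) (hW : Measurable W)
    (N : ℕ → Ω → 𝒩) (hN : ∀ n, Measurable (N n))
    -- memoryless time-invariant channel: i.i.d. noise independent of the message
    (hiid : iIndepFun N μ)
    (hident : ∀ n, Measure.map (N n) μ = Measure.map (N 0) μ)
    (hindep : IndepFun W (fun ω (n : ℕ) => N n ω) μ)
    (g : 𝒲 → 𝒩 → 𝒴) (hg : Measurable fun p : 𝒲 × 𝒩 => g p.1 p.2)
    (S : 𝒴 → 𝒲 → 𝒲) (hS : Measurable fun p : 𝒴 × 𝒲 => S p.1 p.2)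
    (Wt : ℕ → Ω → 𝒲) (Y : ℕ → Ω → 𝒴)
    (hWt : ∀ n, Measurable (Wt n)) (hY : ∀ n, Measurable (Y n))
    (hW0 : Wt 0 = W)
    (hYdef : ∀ n ω, Y n ω = g (Wt n ω) (N n ω))
    (hrec : ∀ n ω, Wt (n + 1) ω = S (Y n ω) (Wt n ω))
    -- posterior matching: `S_y # P_{W̃_1|Y_1=y} = P_W` for (almost) all `y`
    (hPM : ∀ᵐ y ∂(Measure.map (Y 0) μ),
      Measure.map (S y) ((condDistrib (Wt 0) (Y 0) μ) y) = Measure.map W μ) :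
    ∀ n,
      (∀ᵐ ω ∂μ,
        (condDistrib (Wt (n + 1)) (fun ω' (i : Fin (n + 1)) => Y i ω') μ)
          (fun i : Fin (n + 1) => Y i ω) = Measure.map W μ) ∧
      IndepFun (Wt (n + 1)) (fun ω (i : Fin (n + 1)) => Y i ω) μ := by
  rw [hW0] at hPM
  haveI hνP : IsProbabilityMeasure (Measure.map W μ) :=
    Measure.isProbabilityMeasure_map hW.aemeasurable
  haveI hρP : IsProbabilityMeasure (Measure.map (N 0) μ) :=
    Measure.isProbabilityMeasure_map (hN 0).aemeasurable
  haveI hYP : ∀ n, IsProbabilityMeasure (Measure.map (Y n) μ) := fun n =>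
    Measure.isProbabilityMeasure_map (hY n).aemeasurable
  have hYv : ∀ n, Measurable (fun ω (i : Fin (n + 1)) => Y i ω) := fun n =>
    measurable_pi_lambda _ (fun i => hY i)
  haveI hYvP : ∀ n, IsProbabilityMeasure (Measure.map (fun ω (i : Fin (n + 1)) => Y i ω) μ) :=
    fun n => Measure.isProbabilityMeasure_map (hYv n).aemeasurable
  -- uncurried maps
  set h : 𝒲 × 𝒩 → 𝒴 × 𝒲 := fun p => (g p.1 p.2, S (g p.1 p.2) p.1) with hh_def
  have hh : Measurable h := (hg).prodMk (hS.comp (hg.prodMk measurable_fst))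
  -- trajectory representation
  have hrep : ∀ k ω, Wt k ω = pmTraj g S k (W ω, fun i => N i ω) := by
    intro k
    induction k with
    | zero => intro ω; simp [pmTraj, hW0]
    | succ k ih => intro ω; rw [hrec, hYdef, ih ω]; rfl
  -- step 2 of base: the posterior matching pushforward
  have hstep2 : μ.map (fun ω => (Y 0 ω, Wt 1 ω))
      = (Measure.map (Y 0) μ).prod (Measure.map W μ) := by
    haveI : IsProbabilityMeasure (μ.map (fun ω => (Y 0 ω, W ω))) :=
      Measure.isProbabilityMeasure_map ((hY 0).prodMk hW).aemeasurable
    have hdis : Measure.map (Y 0) μ ⊗ₘ condDistrib W (Y 0) μ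
        = μ.map (fun ω => (Y 0 ω, W ω)) := by
      rw [condDistrib_def, ← Measure.fst_map_prodMk hW]
      exact Measure.disintegrate _ _
    refine (Measure.prod_eq fun s t hs ht => ?_).symm
    have hE : MeasurableSet {p : 𝒴 × 𝒲 | p.1 ∈ s ∧ S p.1 p.2 ∈ t} :=
      (measurable_fst hs).inter (hS ht)
    have hpre : (fun ω => (Y 0 ω, Wt 1 ω)) ⁻¹' (s ×ˢ t)
        = (fun ω => (Y 0 ω, W ω)) ⁻¹' {p : 𝒴 × 𝒲 | p.1 ∈ s ∧ S p.1 p.2 ∈ t} := by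
      ext ω
      simp only [Set.mem_preimage, Set.mem_prod, Set.mem_setOf_eq, hrec 0 ω, hW0]
    rw [Measure.map_apply ((hY 0).prodMk (hWt 1)) (hs.prod ht), hpre,
      ← Measure.map_apply ((hY 0).prodMk hW) hE, ← hdis, Measure.compProd_apply hE]
    have hPM' : ∀ᵐ y ∂(Measure.map (Y 0) μ),
        condDistrib W (Y 0) μ y (S y ⁻¹' t) = Measure.map W μ t := by
      filter_upwards [hPM] with y hy
      rw [← hy, Measure.map_apply (show Measurable (S y) from hS.comp measurable_prodMk_left) ht]
    calc ∫⁻ y, condDistrib W (Y 0) μ y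
            (Prod.mk y ⁻¹' {p : 𝒴 × 𝒲 | p.1 ∈ s ∧ S p.1 p.2 ∈ t}) ∂(Measure.map (Y 0) μ)
        = ∫⁻ y, s.indicator (fun y => condDistrib W (Y 0) μ y (S y ⁻¹' t)) y
            ∂(Measure.map (Y 0) μ) := by
          congr 1
          funext y
          by_cases hy : y ∈ s
          · have : Prod.mk y ⁻¹' {p : 𝒴 × 𝒲 | p.1 ∈ s ∧ S p.1 p.2 ∈ t} = S y ⁻¹' t := by
              ext w; simp [hy]
            rw [this, Set.indicator_of_mem hy]
          · have : Prod.mk y ⁻¹' {p : 𝒴 × 𝒲 | p.1 ∈ s ∧ S p.1 p.2 ∈ t} = ∅ := by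
              ext w; simp [hy]
            rw [this, Set.indicator_of_notMem hy]
            simp
      _ = ∫⁻ y in s, condDistrib W (Y 0) μ y (S y ⁻¹' t) ∂(Measure.map (Y 0) μ) := by
          rw [lintegral_indicator hs]
      _ = ∫⁻ _ in s, Measure.map W μ t ∂(Measure.map (Y 0) μ) :=
          lintegral_congr_ae (ae_restrict_of_ae hPM')
      _ = Measure.map (Y 0) μ s * Measure.map W μ t := by
          rw [setLIntegral_const, mul_comm]
  -- base fact B
  have hBase : Measure.map h ((Measure.map W μ).prod (Measure.map (N 0) μ))
      = (Measure.map (Y 0) μ).prod (Measure.map W μ) := by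
    have hWN0 : IndepFun W (N 0) μ := hindep.comp measurable_id (measurable_pi_apply 0)
    have hprodWN : μ.map (fun ω => (W ω, N 0 ω))
        = (Measure.map W μ).prod (Measure.map (N 0) μ) :=
      (indepFun_iff_map_prod_eq_prod_map_map hW.aemeasurable (hN 0).aemeasurable).mp hWN0
    rw [← hprodWN, Measure.map_map hh (hW.prodMk (hN 0))]
    have : (h ∘ fun ω => (W ω, N 0 ω)) = fun ω => (Y 0 ω, Wt 1 ω) := by
      funext ω
      simp only [Function.comp, hh_def]
      rw [hrec 0 ω, hYdef 0 ω, hW0]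
    rw [this, hstep2]
  -- main induction
  have key : ∀ n, μ.map (fun ω => ((fun i : Fin (n + 1) => Y i ω), Wt (n + 1) ω))
      = (Measure.map (fun ω (i : Fin (n + 1)) => Y i ω) μ).prod (Measure.map W μ) := by
    intro n
    induction n with
    | zero =>
      set e : 𝒴 → (Fin 1 → 𝒴) := fun y _ => y with he_def
      have he : Measurable e := measurable_pi_lambda _ (fun _ => measurable_id)
      have h1 : μ.map (fun ω => ((fun i : Fin (0 + 1) => Y i ω), Wt (0 + 1) ω))
          = Measure.map (Prod.map e id) (μ.map (fun ω => (Y 0 ω, Wt 1 ω))) := by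
        rw [Measure.map_map (he.prodMap measurable_id) ((hY 0).prodMk (hWt 1))]
        congr 1
        funext ω
        simp only [Function.comp, Prod.map, id_eq, he_def]
        congr 1
        funext i
        have : (i : ℕ) = 0 := Nat.lt_one_iff.mp i.isLt
        rw [this]
      have h2 : μ.map (fun ω (i : Fin (0 + 1)) => Y i ω)
          = Measure.map e (Measure.map (Y 0) μ) := by
        rw [Measure.map_map he (hY 0)]
        congr 1
        funext ω
        funext i
        simp only [Function.comp, he_def]
        have : (i : ℕ) = 0 := Nat.lt_one_iff.mp i.isLt
        rw [this]
      rw [h1, hstep2, ← Measure.map_prod_map _ _ he measurable_id, Measure.map_id, h2]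
    | succ n ih =>
      set A := Measure.map (fun ω (i : Fin (n + 1)) => Y i ω) μ with hA_def
      haveI : IsProbabilityMeasure A := hYvP n
      have hXmeas : Measurable (fun ω (i : Fin (n + 1)) => N i ω) :=
        measurable_pi_lambda _ (fun i => hN i)
      -- independence of the fresh noise from everything so far
      have h1 : IndepFun (fun ω (i : Fin (n + 1)) => N i ω) (N (n + 1)) μ := by
        have hd : Disjoint (Finset.range (n + 1)) ({n + 1} : Finset ℕ) := by simp
        have hbase := hiid.indepFun_finset (Finset.range (n + 1)) {n + 1} hd hN
        have hφ : Measurable (fun v : ((Finset.range (n + 1) : Finset ℕ) → 𝒩) =>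
            fun i : Fin (n + 1) => v ⟨(i : ℕ), Finset.mem_range.mpr i.isLt⟩) :=
          measurable_pi_lambda _ (fun i => measurable_pi_apply _)
        have hψ : Measurable (fun v : (({n + 1} : Finset ℕ) → 𝒩) =>
            v ⟨n + 1, Finset.mem_singleton_self _⟩) := measurable_pi_apply _
        exact hbase.comp hφ hψ
      have h2 : IndepFun W (fun ω => ((fun i : Fin (n + 1) => N i ω), N (n + 1) ω)) μ :=
        hindep.comp measurable_id
          ((measurable_pi_lambda _ (fun i => measurable_pi_apply _)).prodMk
            (measurable_pi_apply (n + 1)))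
      have h3 : IndepFun (fun ω => (W ω, fun i : Fin (n + 1) => N i ω)) (N (n + 1)) μ :=
        indep_prod_mk_left_aux hW hXmeas (hN (n + 1)) h2 h1
      -- the pair (Y_{0..n}, W̃_{n+1}) is a function of (W, N_{0..n})
      set ext' : 𝒲 × (Fin (n + 1) → 𝒩) → 𝒲 × (ℕ → 𝒩) := fun q =>
        (q.1, fun k => if hk : k < n + 1 then q.2 ⟨k, hk⟩ else q.2 ⟨0, n.succ_pos⟩)
        with hext_def
      have hext_meas : Measurable ext' := by
        refine measurable_fst.prodMk (measurable_pi_lambda _ (fun k => ?_))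
        by_cases hk : k < n + 1
        · simp only [hk, dif_pos]
          exact (measurable_pi_apply _).comp measurable_snd
        · simp only [hk, dif_neg, not_false_iff]
          exact (measurable_pi_apply _).comp measurable_snd
      set F' : 𝒲 × (Fin (n + 1) → 𝒩) → (Fin (n + 1) → 𝒴) × 𝒲 := fun q =>
        ((fun i : Fin (n + 1) => g (pmTraj g S i (ext' q)) ((ext' q).2 i)),
          pmTraj g S (n + 1) (ext' q)) with hF_def
      have hF_meas : Measurable F' := by
        refine (measurable_pi_lambda _ (fun i => ?_)).prodMk
          ((pmTraj_measurable hg hS (n + 1)).comp hext_meas)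
        exact hg.comp ((((pmTraj_measurable hg hS i).comp hext_meas)).prodMk
          (((measurable_pi_apply ((i : ℕ))).comp measurable_snd).comp hext_meas))
      have hF'Z : ∀ ω, F' (W ω, fun i : Fin (n + 1) => N i ω)
          = ((fun i : Fin (n + 1) => Y i ω), Wt (n + 1) ω) := by
        intro ω
        have hagree : ∀ (k : ℕ), k ≤ n + 1 →
            pmTraj g S k (ext' (W ω, fun i : Fin (n + 1) => N i ω))
              = pmTraj g S k (W ω, fun i => N i ω) := by
          intro k hk
          refine pmTraj_congr g S k _ _ rfl (fun i hi => ?_)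
          have hi' : i < n + 1 := lt_of_lt_of_le hi hk
          simp [hext_def, hi']
          intro h; omega
        simp only [hF_def]
        refine Prod.ext ?_ ?_
        · funext i
          have hlt : (i : ℕ) < n + 1 := i.isLt
          simp only [hext_def, hlt, dif_pos]
          rw [hagree i hlt.le, ← hrep, ← hYdef]
        · rw [hagree (n + 1) le_rfl, ← hrep]
      have hpairIndep : IndepFun
          (fun ω => ((fun i : Fin (n + 1) => Y i ω), Wt (n + 1) ω)) (N (n + 1)) μ := by
        have hc := h3.comp hF_meas measurable_id
        have heq : (F' ∘ fun ω => (W ω, fun i : Fin (n + 1) => N i ω))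
            = fun ω => ((fun i : Fin (n + 1) => Y i ω), Wt (n + 1) ω) := funext hF'Z
        rwa [heq, Function.id_comp] at hc
      have htriple : μ.map
          (fun ω => (((fun i : Fin (n + 1) => Y i ω), Wt (n + 1) ω), N (n + 1) ω))
          = (A.prod (Measure.map W μ)).prod (Measure.map (N 0) μ) := by
        rw [(indepFun_iff_map_prod_eq_prod_map_map
          ((hYv n).prodMk (hWt (n + 1))).aemeasurable (hN (n + 1)).aemeasurable).mp hpairIndep,
          ih, hident (n + 1)]
      -- the new pair as a function of the triple
      set snocF : (Fin (n + 1) → 𝒴) × 𝒴 → (Fin (n + 1 + 1) → 𝒴) := fun r => Fin.snoc r.1 r.2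
        with hsnoc_def
      have hsnoc_meas : Measurable snocF := by
        refine measurable_pi_lambda _ (fun i => ?_)
        refine Fin.lastCases ?_ (fun j => ?_) i
        · simp only [hsnoc_def, Fin.snoc_last]
          exact measurable_snd
        · simp only [hsnoc_def, Fin.snoc_castSucc]
          exact (measurable_pi_apply j).comp measurable_fst
      set G' : ((Fin (n + 1) → 𝒴) × 𝒲) × 𝒩 → (Fin (n + 1 + 1) → 𝒴) × 𝒲 := fun q =>
        (snocF (q.1.1, g q.1.2 q.2), S (g q.1.2 q.2) q.1.2) with hG_def
      have hG_fact : G' = (Prod.map snocF id) ∘ (⇑(MeasurableEquiv.prodAssoc).symm)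
          ∘ (Prod.map id h) ∘ ⇑(MeasurableEquiv.prodAssoc) := rfl
      have hG_meas : Measurable G' := by
        rw [hG_fact]
        exact (hsnoc_meas.prodMap measurable_id).comp
          ((MeasurableEquiv.prodAssoc).symm.measurable.comp
            ((measurable_id.prodMap hh).comp (MeasurableEquiv.prodAssoc).measurable))
      have hGpoint : ∀ ω, G' (((fun i : Fin (n + 1) => Y i ω), Wt (n + 1) ω), N (n + 1) ω)
          = ((fun i : Fin (n + 1 + 1) => Y i ω), Wt (n + 1 + 1) ω) := by
        intro ω
        simp only [hG_def, hsnoc_def]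
        refine Prod.ext ?_ ?_
        · funext i
          refine Fin.lastCases ?_ (fun j => ?_) i
          · simp only [Fin.snoc_last, Fin.val_last]
            exact (hYdef (n + 1) ω).symm
          · simp only [Fin.snoc_castSucc, Fin.coe_castSucc]
        · rw [← hYdef (n + 1) ω, ← hrec (n + 1) ω]
      -- compute the law
      have e1 : μ.map (fun ω => ((fun i : Fin (n + 1 + 1) => Y i ω), Wt (n + 1 + 1) ω))
          = Measure.map G' (μ.map
            (fun ω => (((fun i : Fin (n + 1) => Y i ω), Wt (n + 1) ω), N (n + 1) ω))) := by
        rw [Measure.map_map hG_meas (((hYv n).prodMk (hWt (n + 1))).prodMk (hN (n + 1)))]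
        congr 1
        funext ω
        exact (hGpoint ω).symm
      set X := (A.prod (Measure.map W μ)).prod (Measure.map (N 0) μ) with hX_def
      have c0 : Measure.map (Prod.map snocF id)
          (Measure.map (⇑(MeasurableEquiv.prodAssoc).symm)
            (Measure.map (Prod.map id h) (Measure.map (⇑MeasurableEquiv.prodAssoc) X)))
          = Measure.map G' X := by
        rw [Measure.map_map (measurable_id.prodMap hh) (MeasurableEquiv.prodAssoc).measurable,
          Measure.map_map (MeasurableEquiv.prodAssoc).symm.measurable
            ((measurable_id.prodMap hh).comp (MeasurableEquiv.prodAssoc).measurable),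
          Measure.map_map (hsnoc_meas.prodMap measurable_id)
            ((MeasurableEquiv.prodAssoc).symm.measurable.comp
              ((measurable_id.prodMap hh).comp (MeasurableEquiv.prodAssoc).measurable)),
          hG_fact]
      have c1 : Measure.map (⇑MeasurableEquiv.prodAssoc) X
          = A.prod ((Measure.map W μ).prod (Measure.map (N 0) μ)) := Measure.prodAssoc_prod
      have c2 : Measure.map (Prod.map id h)
          (A.prod ((Measure.map W μ).prod (Measure.map (N 0) μ)))
          = A.prod ((Measure.map (Y 0) μ).prod (Measure.map W μ)) := by
        rw [← Measure.map_prod_map _ _ measurable_id hh, Measure.map_id, hBase]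
      have c3 : Measure.map (⇑(MeasurableEquiv.prodAssoc).symm)
          (A.prod ((Measure.map (Y 0) μ).prod (Measure.map W μ)))
          = (A.prod (Measure.map (Y 0) μ)).prod (Measure.map W μ) := by
        rw [← Measure.prodAssoc_prod (μ := A) (ν := Measure.map (Y 0) μ)
            (τ := Measure.map W μ),
          Measure.map_map (MeasurableEquiv.prodAssoc).symm.measurable
            (MeasurableEquiv.prodAssoc).measurable]
        simp [MeasurableEquiv.symm_comp_self]
      have c4 : Measure.map (Prod.map snocF id)
          ((A.prod (Measure.map (Y 0) μ)).prod (Measure.map W μ))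
          = ((A.prod (Measure.map (Y 0) μ)).map snocF).prod (Measure.map W μ) := by
        rw [← Measure.map_prod_map _ _ hsnoc_meas measurable_id, Measure.map_id]
      have hM : μ.map (fun ω => ((fun i : Fin (n + 1 + 1) => Y i ω), Wt (n + 1 + 1) ω))
          = ((A.prod (Measure.map (Y 0) μ)).map snocF).prod (Measure.map W μ) := by
        rw [e1, htriple, ← c0, c1, c2, c3, c4]
      have hYlaw : Measure.map (fun ω (i : Fin (n + 1 + 1)) => Y i ω) μ
          = (A.prod (Measure.map (Y 0) μ)).map snocF := by
        have h5 := congrArg (Measure.map Prod.fst) hM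
        rw [Measure.map_map measurable_fst ((hYv (n + 1)).prodMk (hWt (n + 1 + 1)))] at h5
        simpa [Function.comp_def] using h5
      rw [hM, hYlaw]
  intro n
  have hpairmeas : Measurable (fun ω => ((fun i : Fin (n + 1) => Y i ω), Wt (n + 1) ω)) :=
    (hYv n).prodMk (hWt (n + 1))
  constructor
  · haveI : IsFiniteKernel (Kernel.const (Fin (n + 1) → 𝒴) (Measure.map W μ)) := by
      infer_instance
    have hcd := condDistrib_ae_eq_of_measure_eq_compProd_of_measurable (μ := μ) (hYv n) (hWt (n + 1))
      (κ := Kernel.const _ (Measure.map W μ))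
      (by rw [Measure.compProd_const]; exact key n)
    have hcd' := ae_of_ae_map (hYv n).aemeasurable hcd
    filter_upwards [hcd'] with ω hω
    rw [hω, Kernel.const_apply]
  · rw [indepFun_iff_map_prod_eq_prod_map_map (hWt (n + 1)).aemeasurable (hYv n).aemeasurable]
    have hswap : μ.map (fun ω => (Wt (n + 1) ω, fun i : Fin (n + 1) => Y i ω))
        = Measure.map Prod.swap
            (μ.map (fun ω => ((fun i : Fin (n + 1) => Y i ω), Wt (n + 1) ω))) := by
      rw [Measure.map_map measurable_swap hpairmeas]
      rfl
    have hWtlaw : μ.map (Wt (n + 1)) = Measure.map W μ := by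
      have h2 := congrArg (Measure.map Prod.snd) (key n)
      rw [Measure.map_map measurable_snd hpairmeas] at h2
      simpa [Function.comp_def] using h2
    rw [hswap, key n, Measure.prod_swap, hWtlaw]
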